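/- Let n ≥ 3 and let A : ℂ → M_{n,(n-1)}(ℂ) be a morphism such that A(t) has rank n−1 for every t ∈ ℂ. Then there exists a vector v ∈ ℂⁿ such that vᵀ · A(t) ≠ 0 for all t ∈ ℂ. -/
import Mathlib

open Matrix

/-- Left kernel of a rank-`m` matrix `(m+1) × m` is one-dimensional. -/
lemma aux_ker {m : ℕ} (M : Matrix (Fin (m+1)) (Fin m) ℂ) (hr : M.rank = m) :
    ∃ u : Fin (m+1) → ℂ, u ≠ 0 ∧ u ᵥ* M = 0 ∧
      ∀ v : Fin (m+1) → ℂ, v ᵥ* M = 0 → ∃ c : ℂ, v = c • u := by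
  classical
  set L := Mᵀ.mulVecLin with hL
  have hvm : ∀ v, L v = v ᵥ* M := fun v => by
    simp [hL, Matrix.mulVecLin_apply, Matrix.mulVec_transpose]
  have hrange : Module.finrank ℂ (LinearMap.range L) = m := by
    have h := M.rank_transpose
    rw [hr] at h
    simpa [Matrix.rank, hL] using h
  have hdim : Module.finrank ℂ (Fin (m+1) → ℂ) = m + 1 := by simp
  have hker : Module.finrank ℂ (LinearMap.ker L) = 1 := by
    have h1 := LinearMap.finrank_range_add_finrank_ker L
    rw [hdim, hrange] at h1
    omega
  have hne : LinearMap.ker L ≠ ⊥ := by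
    intro h
    rw [h] at hker
    simp at hker
  obtain ⟨u, huk, hu0⟩ := Submodule.exists_mem_ne_zero_of_ne_bot hne
  have hsp : Submodule.span ℂ {u} = LinearMap.ker L := by
    apply Submodule.eq_of_le_of_finrank_eq
    · rwa [Submodule.span_singleton_le_iff_mem]
    · rw [finrank_span_singleton hu0, hker]
  refine ⟨u, hu0, by rw [← hvm]; exact huk, ?_⟩
  intro v hv
  have : v ∈ Submodule.span ℂ {u} := by
    rw [hsp]; rw [LinearMap.mem_ker, hvm]; exact hv
  obtain ⟨c, hc⟩ := Submodule.mem_span_singleton.mp this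
  exact ⟨c, hc.symm⟩

/-- Cofactor expansion: the signed maximal minors give a left kernel vector. -/
lemma aux_cof {m : ℕ} (M : Matrix (Fin (m+1)) (Fin m) ℂ) (j : Fin m) :
    ∑ i : Fin (m+1), (-1:ℂ)^(i:ℕ) * M i j * (M.submatrix i.succAbove id).det = 0 := by
  classical
  set B : Matrix (Fin (m+1)) (Fin (m+1)) ℂ :=
    Matrix.of fun i k => (Fin.cons (M i j) (M i) : Fin (m+1) → ℂ) k with hB
  have h0 : B.det = 0 := by
    apply Matrix.det_zero_of_column_eq (i := (0 : Fin (m+1))) (j := j.succ)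
      (Fin.succ_ne_zero j).symm
    intro k
    simp [hB, Fin.cons_succ]
  rw [Matrix.det_succ_column_zero] at h0
  have hsub : ∀ i : Fin (m+1),
      B.submatrix i.succAbove Fin.succ = M.submatrix i.succAbove id := by
    intro i
    ext k l
    simp [hB, Fin.cons_succ]
  have hcol : ∀ i : Fin (m+1), B i 0 = M i j := fun i => by simp [hB]
  calc ∑ i : Fin (m+1), (-1:ℂ)^(i:ℕ) * M i j * (M.submatrix i.succAbove id).det
      = ∑ i : Fin (m+1), (-1:ℂ)^(i:ℕ) * B i 0 * (B.submatrix i.succAbove Fin.succ).det := by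
        apply Finset.sum_congr rfl
        intro i _
        rw [hsub, hcol]
    _ = 0 := h0

theorem main_aux (m : ℕ) (hm : 2 ≤ m) (A : ℂ → Matrix (Fin (m+1)) (Fin m) ℂ)
    (P : Fin (m+1) → Fin m → Polynomial ℂ)
    (hP : ∀ (t : ℂ) (i : Fin (m+1)) (j : Fin m), A t i j = (P i j).eval t)
    (hrk : ∀ t : ℂ, (A t).rank = m) :
    ∃ v : Fin (m+1) → ℂ, ∀ t : ℂ, v ᵥ* (A t) ≠ 0 := by
  classical
  set Q : Fin (m+1) → Polynomial ℂ :=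
    fun i => (-1)^(i:ℕ) * (Matrix.of fun k l => P (i.succAbove k) l).det with hQ
  set q : ℂ → Fin (m+1) → ℂ := fun t i => (Q i).eval t with hq
  have hqval : ∀ t i, q t i = (-1:ℂ)^(i:ℕ) * ((A t).submatrix i.succAbove id).det := by
    intro t i
    have h1 : ((Matrix.of fun k l => P (i.succAbove k) l).map (Polynomial.evalRingHom t))
        = (A t).submatrix i.succAbove id := by
      ext k l
      simp [hP]
    have h2 := RingHom.map_det (Polynomial.evalRingHom t)
      (Matrix.of fun k l => P (i.succAbove k) l)
    rw [RingHom.mapMatrix_apply, h1] at h2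
    simp only [hq, hQ, Polynomial.eval_mul, Polynomial.eval_pow, Polynomial.eval_neg,
      Polynomial.eval_one]
    rw [show ((Matrix.of fun k l => P (i.succAbove k) l).det).eval t
        = (Polynomial.evalRingHom t) (Matrix.of fun k l => P (i.succAbove k) l).det from rfl, h2]
  have hqker : ∀ t, (q t) ᵥ* (A t) = 0 := by
    intro t
    funext j
    have hv : ((q t) ᵥ* (A t)) j = ∑ i, q t i * A t i j := by
      simp [Matrix.vecMul, dotProduct]
    rw [hv]
    calc ∑ i : Fin (m+1), q t i * A t i j
        = ∑ i : Fin (m+1), (-1:ℂ)^(i:ℕ) * A t i j * ((A t).submatrix i.succAbove id).det := by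
          apply Finset.sum_congr rfl
          intro i _
          rw [hqval]
          ring
      _ = 0 := aux_cof (A t) j
  have hqne : ∀ t, q t ≠ 0 := by
    intro t h
    obtain ⟨u, hu0, huk, husp⟩ := aux_ker (A t) (hrk t)
    obtain ⟨i, hi⟩ : ∃ i, u i ≠ 0 := by
      by_contra h'
      push_neg at h'
      exact hu0 (funext h')
    have hdet : ((A t).submatrix i.succAbove id).det ≠ 0 := by
      intro hd
      have hdt : (((A t).submatrix i.succAbove id)ᵀ).det = 0 := by rwa [Matrix.det_transpose]
      obtain ⟨w, hw0, hw⟩ := (Matrix.exists_mulVec_eq_zero_iff).mpr hdt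
      set w' : Fin (m+1) → ℂ := i.insertNth 0 w with hw'
      have hww : w' ᵥ* (A t) = 0 := by
        funext j
        have hv : (w' ᵥ* (A t)) j = ∑ r, w' r * A t r j := by
          simp [Matrix.vecMul, dotProduct]
        rw [hv, Fin.sum_univ_succAbove (fun r => w' r * A t r j) i]
        have h3 : ∑ k, w' (i.succAbove k) * A t (i.succAbove k) j
            = ∑ k, w k * A t (i.succAbove k) j := by
          apply Finset.sum_congr rfl
          intro k _
          rw [hw', Fin.insertNth_apply_succAbove]
        have h4 := congrFun hw j
        have h5 : ∑ k, w k * A t (i.succAbove k) j = 0 := by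
          simpa [Matrix.mulVec, dotProduct, Matrix.submatrix_apply,
            mul_comm] using h4
        rw [hw']
        simp only [Fin.insertNth_apply_same, zero_mul, zero_add]
        rw [← hw', h3, h5]
        simp
      obtain ⟨c, hc⟩ := husp w' hww
      have hc0 : c ≠ 0 := by
        rintro rfl
        rw [zero_smul] at hc
        apply hw0
        funext k
        have := congrFun hc (i.succAbove k)
        simpa [hw', Fin.insertNth_apply_succAbove] using this
      have : w' i = 0 := by simp [hw']
      rw [hc] at this
      simp only [Pi.smul_apply, smul_eq_mul] at this
      rcases mul_eq_zero.mp this with h' | h'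
      · exact hc0 h'
      · exact hi h'
    have := congrFun h i
    rw [hqval] at this
    simp only [Pi.zero_apply, mul_eq_zero] at this
    rcases this with h' | h'
    · exact (pow_ne_zero _ (by norm_num : (-1:ℂ) ≠ 0)) h'
    · exact hdet h'
  have hspan : ∀ t (v : Fin (m+1) → ℂ), v ᵥ* (A t) = 0 → ∃ c : ℂ, v = c • q t := by
    intro t v hv
    obtain ⟨u, hu0, huk, husp⟩ := aux_ker (A t) (hrk t)
    obtain ⟨c, hc⟩ := husp v hv
    obtain ⟨d, hd⟩ := husp (q t) (hqker t)
    have hd0 : d ≠ 0 := by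
      rintro rfl
      rw [zero_smul] at hd
      exact hqne t hd
    refine ⟨c / d, ?_⟩
    rw [hc, hd, smul_smul]
    congr 1
    field_simp
  -- the three distinguished indices
  have hm1 : (1 : ℕ) < m + 1 := by omega
  have hm2 : (2 : ℕ) < m + 1 := by omega
  set i0 : Fin (m+1) := ⟨0, by omega⟩ with hi0
  set i1 : Fin (m+1) := ⟨1, hm1⟩ with hi1
  set i2 : Fin (m+1) := ⟨2, hm2⟩ with hi2
  have h01 : i1 ≠ i0 := by simp [hi0, hi1, Fin.ext_iff]
  have h02 : i2 ≠ i0 := by simp [hi0, hi2, Fin.ext_iff]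
  have h12 : i2 ≠ i1 := by simp [hi1, hi2, Fin.ext_iff]
  by_cases h0 : Q i0 = 0
  · -- q t i0 = 0 always; take v = indicator of i0
    refine ⟨fun i => if i = i0 then 1 else 0, ?_⟩
    intro t hvt
    obtain ⟨c, hc⟩ := hspan t _ hvt
    have := congrFun hc i0
    simp only [if_pos rfl, Pi.smul_apply, smul_eq_mul] at this
    rw [hq] at this
    simp only [h0, Polynomial.eval_zero, mul_zero] at this
    exact one_ne_zero this
  · set a : ℂ := if Q i1 = 0 then 1 else 0 with ha
    set p : Polynomial ℂ := Polynomial.C a * Q i0 - Q i1 with hp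
    have hpne : p ≠ 0 := by
      rw [hp, ha]
      by_cases h1 : Q i1 = 0
      · simp [h1, h0]
      · simp [h1]
    set bad : Finset ℂ :=
      p.roots.toFinset.image (fun t => (Q i2).eval t / (Q i0).eval t) with hbad
    obtain ⟨b, hb⟩ := Infinite.exists_notMem_finset bad
    refine ⟨fun i => if i = i0 then 1 else if i = i1 then a else if i = i2 then b else 0, ?_⟩
    intro t hvt
    obtain ⟨c, hc⟩ := hspan t _ hvt
    have e0 : (1:ℂ) = c * q t i0 := by
      have := congrFun hc i0
      simpa using this
    have e1 : a = c * q t i1 := by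
      have := congrFun hc i1
      simpa [h01] using this
    have e2 : b = c * q t i2 := by
      have := congrFun hc i2
      simpa [h02, h12] using this
    have hq0 : q t i0 ≠ 0 := by
      intro h
      rw [h, mul_zero] at e0
      exact one_ne_zero e0
    have hc0 : c ≠ 0 := by
      intro h
      rw [h, zero_mul] at e0
      exact one_ne_zero e0
    -- t is a root of p
    have hroot : p.eval t = 0 := by
      rw [hp]
      simp only [Polynomial.eval_sub, Polynomial.eval_mul, Polynomial.eval_C]
      have : a * q t i0 - q t i1 = 0 := by
        rw [e1]
        have : c * q t i1 * q t i0 = q t i1 * (c * q t i0) := by ring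
        rw [this, ← e0, mul_one]
        ring
      simpa [hq] using this
    have htS : t ∈ p.roots.toFinset := by
      rw [Multiset.mem_toFinset, Polynomial.mem_roots hpne]
      exact hroot
    have hbb : b = (Q i2).eval t / (Q i0).eval t := by
      have hcinv : c = (q t i0)⁻¹ := eq_inv_of_mul_eq_one_right (by rw [mul_comm]; exact e0.symm)
      rw [e2, hcinv, inv_mul_eq_div]
    exact hb (Finset.mem_image.mpr ⟨t, htS, hbb.symm⟩)

theorem stmt_10 (n : ℕ) (hn : 3 ≤ n) (A : ℂ → Matrix (Fin n) (Fin (n - 1)) ℂ)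
    (P : Fin n → Fin (n - 1) → Polynomial ℂ)
    (hP : ∀ (t : ℂ) (i : Fin n) (j : Fin (n - 1)), A t i j = (P i j).eval t)
    (hrk : ∀ t : ℂ, (A t).rank = n - 1) :
    ∃ v : Fin n → ℂ, ∀ t : ℂ, Matrix.vecMul v (A t) ≠ 0 := by
  obtain ⟨m, rfl⟩ : ∃ m, n = m + 1 := ⟨n - 1, by omega⟩
  exact main_aux m (by omega) A P hP (fun t => by simpa using hrk t)
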